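/- If a(x,u) = ψ_uu/ψ_u, b(x,u) = (2φ_xψ_xu − ψ_uφ_xx)/(φ_xψ_u), and c(x,u) = (φ_xψ_xx − ψ_xφ_xx)/(φ_xψ_u) for smooth φ(x) with φ_x ≠ 0 and smooth ψ(x,u) with ψ_u ≠ 0, then c_uu − a_xx − a_x b + a_u c + c_u a = 0. -/

import Mathlib

/-- partial derivative in the first (x) variable -/
noncomputable def pX (f : ℝ → ℝ → ℝ) : ℝ → ℝ → ℝ := fun x u => deriv (fun t => f t u) x
/-- partial derivative in the second (u) variable -/
noncomputable def pU (f : ℝ → ℝ → ℝ) : ℝ → ℝ → ℝ := fun x u => deriv (fun v => f x v) u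


/-- partial derivative in the first coordinate, uncurried form -/
noncomputable def PxU (F : ℝ × ℝ → ℝ) : ℝ × ℝ → ℝ := fun p => fderiv ℝ F p (1, 0)
/-- partial derivative in the second coordinate, uncurried form -/
noncomputable def PuU (F : ℝ × ℝ → ℝ) : ℝ × ℝ → ℝ := fun p => fderiv ℝ F p (0, 1)

lemma contDiff_PxU {F : ℝ × ℝ → ℝ} {m n : WithTop ℕ∞} (hF : ContDiff ℝ n F)
    (h : m + 1 ≤ n) : ContDiff ℝ m (PxU F) :=
  (hF.fderiv_right h).clm_apply contDiff_const

lemma contDiff_PuU {F : ℝ × ℝ → ℝ} {m n : WithTop ℕ∞} (hF : ContDiff ℝ n F)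
    (h : m + 1 ≤ n) : ContDiff ℝ m (PuU F) :=
  (hF.fderiv_right h).clm_apply contDiff_const

lemma hasDerivAt_PxU {F : ℝ × ℝ → ℝ} {x v : ℝ} (h : DifferentiableAt ℝ F (x, v)) :
    HasDerivAt (fun t => F (t, v)) (PxU F (x, v)) x := by
  have h1 : HasFDerivAt (fun t : ℝ => (t, v))
      ((ContinuousLinearMap.id ℝ ℝ).prod 0) x :=
    (hasFDerivAt_id x).prodMk (hasFDerivAt_const v x)
  have h2 := (h.hasFDerivAt.comp x h1).hasDerivAt
  simp only [PxU] at h2 ⊢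
  exact h2

lemma hasDerivAt_PuU {F : ℝ × ℝ → ℝ} {x v : ℝ} (h : DifferentiableAt ℝ F (x, v)) :
    HasDerivAt (fun s => F (x, s)) (PuU F (x, v)) v := by
  have h1 : HasFDerivAt (fun s : ℝ => (x, s))
      ((0 : ℝ →L[ℝ] ℝ).prod (ContinuousLinearMap.id ℝ ℝ)) v :=
    (hasFDerivAt_const x v).prodMk (hasFDerivAt_id v)
  have h2 := (h.hasFDerivAt.comp v h1).hasDerivAt
  simp only [PuU] at h2 ⊢
  exact h2

lemma PuU_PxU_comm {F : ℝ × ℝ → ℝ} (hF : ContDiff ℝ 2 F) : PuU (PxU F) = PxU (PuU F) := by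
  funext p
  have hd : ∀ y, HasFDerivAt F (fderiv ℝ F y) y := fun y =>
    (hF.differentiable (by norm_num) y).hasFDerivAt
  have h2 : DifferentiableAt ℝ (fderiv ℝ F) p :=
    ((hF.fderiv_right (m := 1) (by norm_num)).differentiable (by norm_num)) p
  have hsym := second_derivative_symmetric hd h2.hasFDerivAt
  have e1 : fderiv ℝ (fun q => fderiv ℝ F q ((1 : ℝ), (0 : ℝ))) p
      = (fderiv ℝ (fderiv ℝ F) p).flip (1, 0) := by
    rw [fderiv_clm_apply h2 (differentiableAt_const _)]
    simp
  have e2 : fderiv ℝ (fun q => fderiv ℝ F q ((0 : ℝ), (1 : ℝ))) p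
      = (fderiv ℝ (fderiv ℝ F) p).flip (0, 1) := by
    rw [fderiv_clm_apply h2 (differentiableAt_const _)]
    simp
  show fderiv ℝ (PxU F) p (0, 1) = fderiv ℝ (PuU F) p (1, 0)
  have ex : PxU F = fun q => fderiv ℝ F q ((1 : ℝ), (0 : ℝ)) := rfl
  have eu : PuU F = fun q => fderiv ℝ F q ((0 : ℝ), (1 : ℝ)) := rfl
  rw [ex, eu, e1, e2, ContinuousLinearMap.flip_apply, ContinuousLinearMap.flip_apply]
  exact hsym _ _

theorem second_linearization_condition
    (φ : ℝ → ℝ) (ψ a b c : ℝ → ℝ → ℝ)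
    (hφ : ContDiff ℝ 4 φ)
    (hψ : ContDiff ℝ 4 (fun p : ℝ × ℝ => ψ p.1 p.2))
    (hφx : ∀ x, deriv φ x ≠ 0)
    (hψu : ∀ x v, pU ψ x v ≠ 0)
    (ha : a = fun x v => pU (pU ψ) x v / pU ψ x v)
    (hb : b = fun x v => (2 * deriv φ x * pX (pU ψ) x v - pU ψ x v * deriv (deriv φ) x)
        / (deriv φ x * pU ψ x v))
    (hc : c = fun x v => (deriv φ x * pX (pX ψ) x v - pX ψ x v * deriv (deriv φ) x)
        / (deriv φ x * pU ψ x v)) :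
    ∀ x v, pU (pU c) x v - pX (pX a) x v - pX a x v * b x v
      + pU a x v * c x v + pU c x v * a x v = 0 := by
  set Ψ : ℝ × ℝ → ℝ := fun p => ψ p.1 p.2 with hΨdef
  have hΨ : ContDiff ℝ 4 Ψ := hψ
  have hg01 : ContDiff ℝ 3 (PuU Ψ) := contDiff_PuU hΨ (by norm_num)
  have hg02 : ContDiff ℝ 2 (PuU (PuU Ψ)) := contDiff_PuU hg01 (by norm_num)
  have hg10 : ContDiff ℝ 3 (PxU Ψ) := contDiff_PxU hΨ (by norm_num)
  have hg20 : ContDiff ℝ 2 (PxU (PxU Ψ)) := contDiff_PxU hg10 (by norm_num)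
  have hg11 : ContDiff ℝ 2 (PxU (PuU Ψ)) := contDiff_PxU hg01 (by norm_num)
  have hg12 : ContDiff ℝ 1 (PxU (PuU (PuU Ψ))) := contDiff_PxU hg02 (by norm_num)
  have hg21 : ContDiff ℝ 1 (PxU (PxU (PuU Ψ))) := contDiff_PxU hg11 (by norm_num)
  have dΨ : Differentiable ℝ Ψ := hΨ.differentiable (by norm_num)
  have d01 : Differentiable ℝ (PuU Ψ) := hg01.differentiable (by norm_num)
  have d02 : Differentiable ℝ (PuU (PuU Ψ)) := hg02.differentiable (by norm_num)
  have d10 : Differentiable ℝ (PxU Ψ) := hg10.differentiable (by norm_num)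
  have d20 : Differentiable ℝ (PxU (PxU Ψ)) := hg20.differentiable (by norm_num)
  have d11 : Differentiable ℝ (PxU (PuU Ψ)) := hg11.differentiable (by norm_num)
  have d12 : Differentiable ℝ (PxU (PuU (PuU Ψ))) := hg12.differentiable (by norm_num)
  have d21 : Differentiable ℝ (PxU (PxU (PuU Ψ))) := hg21.differentiable (by norm_num)
  -- commutation of mixed partials
  have c0 : PuU (PxU Ψ) = PxU (PuU Ψ) := PuU_PxU_comm (hΨ.of_le (by norm_num))
  have cA : PuU (PxU (PuU Ψ)) = PxU (PuU (PuU Ψ)) := PuU_PxU_comm (hg01.of_le (by norm_num))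
  have cB : PuU (PxU (PxU Ψ)) = PxU (PxU (PuU Ψ)) := by
    rw [PuU_PxU_comm (hg10.of_le (by norm_num)), c0]
  have cC : PuU (PxU (PxU (PuU Ψ))) = PxU (PxU (PuU (PuU Ψ))) := by
    rw [PuU_PxU_comm hg11, cA]
  -- bridge from curried partial derivatives to uncurried ones
  have E1 : ∀ x v, pU ψ x v = PuU Ψ (x,v) :=
    fun x v => (hasDerivAt_PuU (dΨ (x, v))).deriv
  have E2 : ∀ x v, pX ψ x v = PxU Ψ (x,v) :=
    fun x v => (hasDerivAt_PxU (dΨ (x, v))).deriv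
  have E3 : ∀ x v, pU (pU ψ) x v = PuU (PuU Ψ) (x,v) := by
    intro x v
    have hf : (fun s => pU ψ x s) = fun s => PuU Ψ (x, s) := funext fun s => E1 x s
    show deriv (fun s => pU ψ x s) v = _
    rw [hf]
    exact (hasDerivAt_PuU (d01 (x, v))).deriv
  have E4 : ∀ x v, pX (pU ψ) x v = PxU (PuU Ψ) (x,v) := by
    intro x v
    have hf : (fun t => pU ψ t v) = fun t => PuU Ψ (t, v) := funext fun t => E1 t v
    show deriv (fun t => pU ψ t v) x = _
    rw [hf]
    exact (hasDerivAt_PxU (d01 (x, v))).deriv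
  have E5 : ∀ x v, pX (pX ψ) x v = PxU (PxU Ψ) (x,v) := by
    intro x v
    have hf : (fun t => pX ψ t v) = fun t => PxU Ψ (t, v) := funext fun t => E2 t v
    show deriv (fun t => pX ψ t v) x = _
    rw [hf]
    exact (hasDerivAt_PxU (d10 (x, v))).deriv
  have hne : ∀ x v, PuU Ψ (x,v) ≠ 0 := fun x v => E1 x v ▸ hψu x v
  have ea : ∀ x v, a x v = PuU (PuU Ψ) (x,v) / PuU Ψ (x,v) := by
    intro x v; rw [ha]; simp only []; rw [E3 x v, E1 x v]
  have eb : ∀ x v, b x v = (2 * deriv φ x * PxU (PuU Ψ) (x,v) - PuU Ψ (x,v) * deriv (deriv φ) x) / (deriv φ x * PuU Ψ (x,v)) := by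
    intro x v; rw [hb]; simp only []; rw [E4 x v, E1 x v]
  have ec : ∀ x v, c x v = (deriv φ x * PxU (PxU Ψ) (x,v) - PxU Ψ (x,v) * deriv (deriv φ) x) / (deriv φ x * PuU Ψ (x,v)) := by
    intro x v; rw [hc]; simp only []; rw [E5 x v, E2 x v, E1 x v]
  -- u-derivative of a
  have hAu : ∀ x v, pU a x v = (PuU (PuU (PuU Ψ)) (x,v) * PuU Ψ (x,v) - PuU (PuU Ψ) (x,v) * PuU (PuU Ψ) (x,v)) / PuU Ψ (x,v) ^ 2 := by
    intro x v
    have hf : (fun s => a x s) = fun s => PuU (PuU Ψ) (x, s) / PuU Ψ (x, s) :=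
      funext fun s => ea x s
    show deriv (fun s => a x s) v = _
    rw [hf]
    exact ((hasDerivAt_PuU (d02 (x, v))).div (hasDerivAt_PuU (d01 (x, v))) (hne x v)).deriv
  -- x-derivative of a
  have hAx : ∀ x v, pX a x v = (PxU (PuU (PuU Ψ)) (x,v) * PuU Ψ (x,v) - PuU (PuU Ψ) (x,v) * PxU (PuU Ψ) (x,v)) / PuU Ψ (x,v) ^ 2 := by
    intro x v
    have hf : (fun t => a t v) = fun t => PuU (PuU Ψ) (t, v) / PuU Ψ (t, v) :=
      funext fun t => ea t v
    show deriv (fun t => a t v) x = _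
    rw [hf]
    exact ((hasDerivAt_PxU (d02 (x, v))).div (hasDerivAt_PxU (d01 (x, v))) (hne x v)).deriv
  -- second x-derivative of a
  have hAxx : ∀ x v, pX (pX a) x v = ((PxU (PxU (PuU (PuU Ψ))) (x,v) * PuU Ψ (x,v) + PxU (PuU (PuU Ψ)) (x,v) * PxU (PuU Ψ) (x,v) - (PxU (PuU (PuU Ψ)) (x,v) * PxU (PuU Ψ) (x,v) + PuU (PuU Ψ) (x,v) * PxU (PxU (PuU Ψ)) (x,v))) * PuU Ψ (x,v) ^ 2 - (PxU (PuU (PuU Ψ)) (x,v) * PuU Ψ (x,v) - PuU (PuU Ψ) (x,v) * PxU (PuU Ψ) (x,v)) * (2 * PuU Ψ (x,v) ^ (2 - 1) * PxU (PuU Ψ) (x,v))) / (PuU Ψ (x,v) ^ 2) ^ 2 := by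
    intro x v
    have hf : (fun t => pX a t v)
        = fun t => (PxU (PuU (PuU Ψ)) (t, v) * PuU Ψ (t, v) - PuU (PuU Ψ) (t, v) * PxU (PuU Ψ) (t, v)) / PuU Ψ (t, v) ^ 2 :=
      funext fun t => hAx t v
    show deriv (fun t => pX a t v) x = _
    rw [hf]
    have h12 := hasDerivAt_PxU (d12 (x, v))
    have h01 := hasDerivAt_PxU (d01 (x, v))
    have h02 := hasDerivAt_PxU (d02 (x, v))
    have h11 := hasDerivAt_PxU (d11 (x, v))
    exact (((h12.mul h01).sub (h02.mul h11)).div (h01.pow 2)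
      (pow_ne_zero 2 (hne x v))).deriv
  -- u-derivative of c
  have hCu : ∀ x v, pU c x v = ((deriv φ x * PxU (PxU (PuU Ψ)) (x,v) - PxU (PuU Ψ) (x,v) * deriv (deriv φ) x) * (deriv φ x * PuU Ψ (x,v)) - (deriv φ x * PxU (PxU Ψ) (x,v) - PxU Ψ (x,v) * deriv (deriv φ) x) * (deriv φ x * PuU (PuU Ψ) (x,v))) / (deriv φ x * PuU Ψ (x,v)) ^ 2 := by
    intro x v
    have hf : (fun s => c x s)
        = fun s => (deriv φ x * PxU (PxU Ψ) (x, s) - PxU Ψ (x, s) * deriv (deriv φ) x) / (deriv φ x * PuU Ψ (x, s)) :=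
      funext fun s => ec x s
    show deriv (fun s => c x s) v = _
    rw [hf]
    have h20 : HasDerivAt (fun s => PxU (PxU Ψ) (x, s)) (PxU (PxU (PuU Ψ)) (x,v)) v := by
      rw [← cB]; exact hasDerivAt_PuU (d20 (x, v))
    have h10 : HasDerivAt (fun s => PxU Ψ (x, s)) (PxU (PuU Ψ) (x,v)) v := by
      rw [← c0]; exact hasDerivAt_PuU (d10 (x, v))
    have h01 := hasDerivAt_PuU (d01 (x, v))
    exact (((h20.const_mul (deriv φ x)).sub (h10.mul_const (deriv (deriv φ) x))).div
      (h01.const_mul (deriv φ x)) (mul_ne_zero (hφx x) (hne x v))).deriv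
  -- second u-derivative of c
  have hCuu : ∀ x v, pU (pU c) x v = (((deriv φ x * PxU (PxU (PuU (PuU Ψ))) (x,v) - PxU (PuU (PuU Ψ)) (x,v) * deriv (deriv φ) x) * (deriv φ x * PuU Ψ (x,v)) + (deriv φ x * PxU (PxU (PuU Ψ)) (x,v) - PxU (PuU Ψ) (x,v) * deriv (deriv φ) x) * (deriv φ x * PuU (PuU Ψ) (x,v)) - ((deriv φ x * PxU (PxU (PuU Ψ)) (x,v) - PxU (PuU Ψ) (x,v) * deriv (deriv φ) x) * (deriv φ x * PuU (PuU Ψ) (x,v)) + (deriv φ x * PxU (PxU Ψ) (x,v) - PxU Ψ (x,v) * deriv (deriv φ) x) * (deriv φ x * PuU (PuU (PuU Ψ)) (x,v)))) * (deriv φ x * PuU Ψ (x,v)) ^ 2 - ((deriv φ x * PxU (PxU (PuU Ψ)) (x,v) - PxU (PuU Ψ) (x,v) * deriv (deriv φ) x) * (deriv φ x * PuU Ψ (x,v)) - (deriv φ x * PxU (PxU Ψ) (x,v) - PxU Ψ (x,v) * deriv (deriv φ) x) * (deriv φ x * PuU (PuU Ψ) (x,v))) * (2 * (deriv φ x * PuU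 Ψ (x,v)) ^ (2 - 1) * (deriv φ x * PuU (PuU Ψ) (x,v)))) / ((deriv φ x * PuU Ψ (x,v)) ^ 2) ^ 2 := by
    intro x v
    have hf : (fun s => pU c x s)
        = fun s => ((deriv φ x * PxU (PxU (PuU Ψ)) (x, s) - PxU (PuU Ψ) (x, s) * deriv (deriv φ) x) * (deriv φ x * PuU Ψ (x, s))
            - (deriv φ x * PxU (PxU Ψ) (x, s) - PxU Ψ (x, s) * deriv (deriv φ) x) * (deriv φ x * PuU (PuU Ψ) (x, s)))
          / (deriv φ x * PuU Ψ (x, s)) ^ 2 :=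
      funext fun s => hCu x s
    show deriv (fun s => pU c x s) v = _
    rw [hf]
    have h21 : HasDerivAt (fun s => PxU (PxU (PuU Ψ)) (x, s)) (PxU (PxU (PuU (PuU Ψ))) (x,v)) v := by
      rw [← cC]; exact hasDerivAt_PuU (d21 (x, v))
    have h11 : HasDerivAt (fun s => PxU (PuU Ψ) (x, s)) (PxU (PuU (PuU Ψ)) (x,v)) v := by
      rw [← cA]; exact hasDerivAt_PuU (d11 (x, v))
    have h20 : HasDerivAt (fun s => PxU (PxU Ψ) (x, s)) (PxU (PxU (PuU Ψ)) (x,v)) v := by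
      rw [← cB]; exact hasDerivAt_PuU (d20 (x, v))
    have h10 : HasDerivAt (fun s => PxU Ψ (x, s)) (PxU (PuU Ψ) (x,v)) v := by
      rw [← c0]; exact hasDerivAt_PuU (d10 (x, v))
    have h01 := hasDerivAt_PuU (d01 (x, v))
    have h02 := hasDerivAt_PuU (d02 (x, v))
    have hA := (h21.const_mul (deriv φ x)).sub (h11.mul_const (deriv (deriv φ) x))
    have hB := h01.const_mul (deriv φ x)
    have hC := (h20.const_mul (deriv φ x)).sub (h10.mul_const (deriv (deriv φ) x))
    have hD := h02.const_mul (deriv φ x)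
    exact (((hA.mul hB).sub (hC.mul hD)).div (hB.pow 2)
      (pow_ne_zero 2 (mul_ne_zero (hφx x) (hne x v)))).deriv
  intro x v
  rw [hCuu x v, hAxx x v, hAx x v, hAu x v, hCu x v, ea x v, eb x v, ec x v]
  have h1 := hne x v
  have h2 := hφx x
  field_simp
  ring
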